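/- With the same setup, for any two distinct unclaimed vertices v₁, v₂, either Δ_{M←v₂}(σ_{M←v₁}) ≤ λ^{−1}·Δ_{M←v₁}(σ), or the same inequality holds with the roles of v₁ and v₂ exchanged, i.e. Δ_{M←v₁}(σ_{M←v₂}) ≤ λ^{−1}·Δ_{M←v₂}(σ). -/
import Mathlib


open scoped Classical

inductive Mark : Type
  | U | M | B
deriving DecidableEq

noncomputable def wS {V : Type*} (lam : ℝ) (σ : V → Mark) (S : Finset V) : ℝ :=
  if ∀ v ∈ S, σ v ≠ Mark.B then lam ^ (S.filter fun v => σ v = Mark.U).card else 0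

noncomputable def totalW {V : Type*} (lam : ℝ) (E : Set (Finset V)) (σ : V → Mark) : ℝ :=
  ∑' S : E, wS lam σ S.1

lemma wS_nonneg {V : Type*} {lam : ℝ} (h0 : 0 < lam) (σ : V → Mark) (S : Finset V) :
    0 ≤ wS lam σ S := by
  unfold wS; split
  · positivity
  · exact le_refl 0

lemma wS_update {V : Type*} {lam : ℝ} (h0 : 0 < lam) (σ : V → Mark) (v : V)
    (hv : σ v = Mark.U) (S : Finset V) :
    wS lam (Function.update σ v Mark.M) S = (if v ∈ S then lam⁻¹ else 1) * wS lam σ S := by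
  unfold wS
  have hcond : (∀ u ∈ S, Function.update σ v Mark.M u ≠ Mark.B) ↔ (∀ u ∈ S, σ u ≠ Mark.B) := by
    constructor <;> intro h u hu
    · by_cases huv : u = v
      · subst huv; rw [hv]; simp
      · have := h u hu; rwa [Function.update_of_ne huv] at this
    · by_cases huv : u = v
      · subst huv; rw [Function.update_self]; simp
      · rw [Function.update_of_ne huv]; exact h u hu
  rw [if_congr hcond rfl rfl]
  by_cases hP : ∀ u ∈ S, σ u ≠ Mark.B
  · rw [if_pos hP, if_pos hP]
    have hfilter : S.filter (fun u => Function.update σ v Mark.M u = Mark.U)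
        = (S.filter (fun u => σ u = Mark.U)).erase v := by
      ext u
      simp only [Finset.mem_filter, Finset.mem_erase]
      constructor
      · rintro ⟨hu, hU⟩
        by_cases huv : u = v
        · subst huv; rw [Function.update_self] at hU; cases hU
        · rw [Function.update_of_ne huv] at hU; exact ⟨huv, hu, hU⟩
      · rintro ⟨huv, hu, hU⟩; exact ⟨hu, by rwa [Function.update_of_ne huv]⟩
    rw [hfilter]
    by_cases hvS : v ∈ S
    · rw [if_pos hvS]
      have hvf : v ∈ S.filter (fun u => σ u = Mark.U) := Finset.mem_filter.2 ⟨hvS, hv⟩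
      rw [Finset.card_erase_of_mem hvf]
      have hk : 1 ≤ (S.filter (fun u => σ u = Mark.U)).card :=
        Finset.card_pos.2 ⟨v, hvf⟩
      obtain ⟨j, hj⟩ := Nat.exists_eq_add_of_le hk
      rw [hj]
      simp only [Nat.add_sub_cancel_left, pow_add, pow_one]
      field_simp
    · rw [if_neg hvS, one_mul, Finset.erase_eq_of_notMem]
      intro hmem
      exact hvS (Finset.mem_filter.1 hmem).1
  · rw [if_neg hP, if_neg hP, mul_zero]

/-- Observation: either `Δ_{M←v₂}(σ_{M←v₁}) ≤ λ⁻¹·Δ_{M←v₁}(σ)` or the same with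
`v₁` and `v₂` exchanged. -/
theorem stmt_3 {V : Type*} (lam : ℝ) (h0 : 0 < lam) (h1 : lam < 1)
    (E : Set (Finset V)) (σ : V → Mark) (v₁ v₂ : V) (hne : v₁ ≠ v₂)
    (hv₁ : σ v₁ = Mark.U) (hv₂ : σ v₂ = Mark.U)
    (hσ : Summable fun S : E => wS lam σ S.1)
    (h1M : Summable fun S : E => wS lam (Function.update σ v₁ Mark.M) S.1)
    (h2M : Summable fun S : E => wS lam (Function.update σ v₂ Mark.M) S.1)
    (h12M : Summable fun S : E =>
      wS lam (Function.update (Function.update σ v₁ Mark.M) v₂ Mark.M) S.1)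
    (h21M : Summable fun S : E =>
      wS lam (Function.update (Function.update σ v₂ Mark.M) v₁ Mark.M) S.1) :
    (totalW lam E (Function.update (Function.update σ v₁ Mark.M) v₂ Mark.M)
        - totalW lam E (Function.update σ v₁ Mark.M)
      ≤ lam⁻¹ * (totalW lam E (Function.update σ v₁ Mark.M) - totalW lam E σ)) ∨
    (totalW lam E (Function.update (Function.update σ v₂ Mark.M) v₁ Mark.M)
        - totalW lam E (Function.update σ v₂ Mark.M)
      ≤ lam⁻¹ * (totalW lam E (Function.update σ v₂ Mark.M) - totalW lam E σ)) := by
  classical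
  have hcomm : Function.update (Function.update σ v₂ Mark.M) v₁ Mark.M
      = Function.update (Function.update σ v₁ Mark.M) v₂ Mark.M :=
    Function.update_comm hne.symm _ _ _
  set σ₁ := Function.update σ v₁ Mark.M with hσ₁def
  set σ₂ := Function.update σ v₂ Mark.M with hσ₂def
  set σ₁₂ := Function.update σ₁ v₂ Mark.M with hσ₁₂def
  set A : E → ℝ := fun S => wS lam σ S.1 with hA
  set B1 : E → ℝ := fun S => wS lam σ₁ S.1 with hB1
  set B2 : E → ℝ := fun S => wS lam σ₂ S.1 with hB2
  set C : E → ℝ := fun S => wS lam σ₁₂ S.1 with hC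
  have hσ₁v₂ : σ₁ v₂ = Mark.U := by
    rw [hσ₁def, Function.update_of_ne hne.symm]; exact hv₂
  have ht : 1 ≤ lam⁻¹ := by
    rw [one_le_inv_iff₀]; exact ⟨h0, h1.le⟩
  have key : ∀ S : E,
      0 ≤ (lam⁻¹ * (B1 S - A S) - (C S - B1 S)) + (lam⁻¹ * (B2 S - A S) - (C S - B2 S)) := by
    intro S
    have e1 : B1 S = (if v₁ ∈ S.1 then lam⁻¹ else 1) * A S := wS_update h0 σ v₁ hv₁ S.1
    have e2 : B2 S = (if v₂ ∈ S.1 then lam⁻¹ else 1) * A S := wS_update h0 σ v₂ hv₂ S.1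
    have e3 : C S = (if v₂ ∈ S.1 then lam⁻¹ else 1) * B1 S := wS_update h0 σ₁ v₂ hσ₁v₂ S.1
    have hAnn : 0 ≤ A S := wS_nonneg h0 σ S.1
    rw [e3, e1, e2]
    by_cases m1 : v₁ ∈ S.1 <;> by_cases m2 : v₂ ∈ S.1 <;> simp only [m1, m2, if_pos, if_neg,
      if_true, if_false, one_mul, mul_one] <;> nlinarith [hAnn, ht,
      mul_nonneg (mul_nonneg (sub_nonneg.mpr ht) (sub_nonneg.mpr ht)) hAnn]
  -- summability
  have sA : Summable A := hσ
  have sB1 : Summable B1 := h1M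
  have sB2 : Summable B2 := h2M
  have sC : Summable C := h12M
  have s1 : Summable (fun S => lam⁻¹ * (B1 S - A S)) := (sB1.sub sA).mul_left _
  have s2 : Summable (fun S => lam⁻¹ * (B2 S - A S)) := (sB2.sub sA).mul_left _
  have sC1 : Summable (fun S => C S - B1 S) := sC.sub sB1
  have sC2 : Summable (fun S => C S - B2 S) := sC.sub sB2
  have h0g : 0 ≤ ∑' S : E, ((lam⁻¹ * (B1 S - A S) - (C S - B1 S))
      + (lam⁻¹ * (B2 S - A S) - (C S - B2 S))) := tsum_nonneg key
  have heq : ∑' S : E, ((lam⁻¹ * (B1 S - A S) - (C S - B1 S))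
      + (lam⁻¹ * (B2 S - A S) - (C S - B2 S)))
      = (lam⁻¹ * (totalW lam E σ₁ - totalW lam E σ) - (totalW lam E σ₁₂ - totalW lam E σ₁))
      + (lam⁻¹ * (totalW lam E σ₂ - totalW lam E σ) - (totalW lam E σ₁₂ - totalW lam E σ₂)) := by
    rw [Summable.tsum_add (s1.sub sC1) (s2.sub sC2), Summable.tsum_sub s1 sC1, Summable.tsum_sub s2 sC2,
      tsum_mul_left, tsum_mul_left, Summable.tsum_sub sB1 sA, Summable.tsum_sub sB2 sA,
      Summable.tsum_sub sC sB1, Summable.tsum_sub sC sB2]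
    rfl
  rw [heq] at h0g
  by_contra hcon
  push_neg at hcon
  obtain ⟨ha, hb⟩ := hcon
  rw [hcomm] at hb
  have hb' : lam⁻¹ * (totalW lam E σ₂ - totalW lam E σ)
      < totalW lam E σ₁₂ - totalW lam E σ₂ := hb
  have ha' : lam⁻¹ * (totalW lam E σ₁ - totalW lam E σ)
      < totalW lam E σ₁₂ - totalW lam E σ₁ := ha
  linarith
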